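/- If every temporal operator in a BSL state formula φ occurs under the scope of a path quantifier E, then every temporal operator in the SL formula tr_A(φ) occurs under the scope of a binding (b, y) for each agent b ∈ Ag, for any parameter set A ⊆ Ag. In particular, if φ is a BSL sentence then tr_Ag(φ) is an SL sentence. -/

import Mathlib

/-- A concurrent game structure: transition function, initial state, valuation. -/
structure CGS (S Ag Act AP : Type) where
  δ : S → (Ag → Act) → S
  init : S
  val : S → AP → Prop

variable {S Ag Act AP Var : Type}

/-- An initial (finite) path: a start state together with the list of decisions taken. -/
abbrev FPath (S Ag Act : Type) := S × List (Ag → Act)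

/-- Last state of an initial path. -/
def CGS.lastState (G : CGS S Ag Act AP) (ρ : FPath S Ag Act) : S :=
  ρ.2.foldl G.δ ρ.1

/-- A strategy assigns an action to every initial path. -/
abbrev Strat (S Ag Act : Type) := FPath S Ag Act → Act

/-- Concatenation of initial paths (meaningful when `G.lastState ρ = ρ'.1`,
i.e. they are glued at the shared state). -/
def FPath.concat (ρ ρ' : FPath S Ag Act) : FPath S Ag Act := (ρ.1, ρ.2 ++ ρ'.2)

/-- The finite prefix with `n` decisions of the play from `q` whose decision stream is `d`. -/
def prefixPath (q : S) (d : ℕ → Ag → Act) (n : ℕ) : FPath S Ag Act :=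
  (q, List.ofFn fun i : Fin n => d i)

/-- The state reached after `i` steps of the play from `q` with decision stream `d`. -/
def stateAt (G : CGS S Ag Act AP) (q : S) (d : ℕ → Ag → Act) (i : ℕ) : S :=
  G.lastState (prefixPath q d i)

/-- An assignment: a partial map from agents and variables to strategies. -/
abbrev Assign (S Ag Act Var : Type) := Ag ⊕ Var → Option (Strat S Ag Act)

/-- The outcome of an assignment from a state: the set of plays (identified with
their decision streams) compatible with all strategies assigned to agents. -/
def outcome (G : CGS S Ag Act AP) (q : S) (χ : Assign S Ag Act Var) :
    Set (ℕ → Ag → Act) :=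
  {d | ∀ (k : ℕ) (a : Ag) (σ : Strat S Ag Act),
      χ (Sum.inl a) = some σ → d k a = σ (prefixPath q d k)}

/-- The `ρ`-translation of a strategy. -/
def transStrat [DecidableEq S] (G : CGS S Ag Act AP) (ρ : FPath S Ag Act)
    (σ : Strat S Ag Act) : Strat S Ag Act :=
  fun ρ' => if ρ'.1 = G.lastState ρ then σ (ρ.concat ρ') else σ ρ'

/-- The `ρ`-translation of an assignment. -/
def transAssign [DecidableEq S] (G : CGS S Ag Act AP) (ρ : FPath S Ag Act)
    (χ : Assign S Ag Act Var) : Assign S Ag Act Var :=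
  fun l => (χ l).map (transStrat G ρ)

/-- Syntax of Strategy Logic (SL). -/
inductive SLForm (AP Ag Var : Type) : Type where
  | atom : AP → SLForm AP Ag Var
  | neg  : SLForm AP Ag Var → SLForm AP Ag Var
  | or   : SLForm AP Ag Var → SLForm AP Ag Var → SLForm AP Ag Var
  | next : SLForm AP Ag Var → SLForm AP Ag Var
  | untl : SLForm AP Ag Var → SLForm AP Ag Var → SLForm AP Ag Var
  | exi  : Var → SLForm AP Ag Var → SLForm AP Ag Var
  | bind : Ag → Var → SLForm AP Ag Var → SLForm AP Ag Var

mutual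
/-- State formulas of Branching-time Strategy Logic (BSL). -/
inductive BSLForm (AP Ag Var : Type) : Type where
  | atom : AP → BSLForm AP Ag Var
  | neg  : BSLForm AP Ag Var → BSLForm AP Ag Var
  | or   : BSLForm AP Ag Var → BSLForm AP Ag Var → BSLForm AP Ag Var
  | exi  : Var → BSLForm AP Ag Var → BSLForm AP Ag Var
  | bind : Ag → Var → BSLForm AP Ag Var → BSLForm AP Ag Var
  | unbind : Ag → BSLForm AP Ag Var → BSLForm AP Ag Var
  | pathE : BSLPath AP Ag Var → BSLForm AP Ag Var
/-- Path formulas of BSL. -/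
inductive BSLPath (AP Ag Var : Type) : Type where
  | state : BSLForm AP Ag Var → BSLPath AP Ag Var
  | neg   : BSLPath AP Ag Var → BSLPath AP Ag Var
  | or    : BSLPath AP Ag Var → BSLPath AP Ag Var → BSLPath AP Ag Var
  | next  : BSLPath AP Ag Var → BSLPath AP Ag Var
  | untl  : BSLPath AP Ag Var → BSLPath AP Ag Var → BSLPath AP Ag Var
end

/-- Semantics of SL. Temporal operators are evaluated on an outcome play of the
current assignment (for complete assignments — the only case where the SL
semantics is defined — this play is unique), with the assignment translated
along the play. -/
def SLsat [DecidableEq S] [DecidableEq Ag] [DecidableEq Var] (G : CGS S Ag Act AP) :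
    Assign S Ag Act Var → S → SLForm AP Ag Var → Prop
  | χ, q, .atom p => G.val q p
  | χ, q, .neg φ => ¬ SLsat G χ q φ
  | χ, q, .or φ φ' => SLsat G χ q φ ∨ SLsat G χ q φ'
  | χ, q, .exi x φ =>
      ∃ σ : Strat S Ag Act, SLsat G (Function.update χ (Sum.inr x) (some σ)) q φ
  | χ, q, .bind a x φ => SLsat G (Function.update χ (Sum.inl a) (χ (Sum.inr x))) q φ
  | χ, q, .next φ => ∃ d ∈ outcome G q χ,
      SLsat G (transAssign G (prefixPath q d 1) χ) (stateAt G q d 1) φ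
  | χ, q, .untl φ φ' => ∃ d ∈ outcome G q χ, ∃ j : ℕ,
      SLsat G (transAssign G (prefixPath q d j) χ) (stateAt G q d j) φ' ∧
      ∀ k < j, SLsat G (transAssign G (prefixPath q d k) χ) (stateAt G q d k) φ

mutual
/-- Semantics of BSL state formulas, at a state under an assignment. -/
def BSLsat [DecidableEq S] [DecidableEq Ag] [DecidableEq Var] (G : CGS S Ag Act AP)
    (χ : Assign S Ag Act Var) (q : S) : BSLForm AP Ag Var → Prop
  | .atom p => G.val q p
  | .neg φ => ¬ BSLsat G χ q φ
  | .or φ φ' => BSLsat G χ q φ ∨ BSLsat G χ q φ'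
  | .exi x φ =>
      ∃ σ : Strat S Ag Act, BSLsat G (Function.update χ (Sum.inr x) (some σ)) q φ
  | .bind a x φ => BSLsat G (Function.update χ (Sum.inl a) (χ (Sum.inr x))) q φ
  | .unbind a φ => BSLsat G (Function.update χ (Sum.inl a) none) q φ
  | .pathE ψ => ∃ d ∈ outcome G q χ, BSLsatP G χ q d 0 ψ

/-- Semantics of BSL path formulas, on the play from `q` with decision stream
`d`, at position `i`; the assignment is translated by the prefix as state
formulas are evaluated. -/
def BSLsatP [DecidableEq S] [DecidableEq Ag] [DecidableEq Var] (G : CGS S Ag Act AP)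
    (χ : Assign S Ag Act Var) (q : S) (d : ℕ → Ag → Act) (i : ℕ) :
    BSLPath AP Ag Var → Prop
  | .state φ => BSLsat G (transAssign G (prefixPath q d i) χ) (stateAt G q d i) φ
  | .neg ψ => ¬ BSLsatP G χ q d i ψ
  | .or ψ ψ' => BSLsatP G χ q d i ψ ∨ BSLsatP G χ q d i ψ'
  | .next ψ => BSLsatP G χ q d (i + 1) ψ
  | .untl ψ ψ' => ∃ j, i ≤ j ∧ BSLsatP G χ q d j ψ' ∧
      ∀ k, i ≤ k → k < j → BSLsatP G χ q d k ψ
end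

/-- Free variables of an SL formula. -/
def SLfree : SLForm AP Ag Var → Set Var
  | .atom _ => ∅
  | .neg φ => SLfree φ
  | .or φ φ' => SLfree φ ∪ SLfree φ'
  | .next φ => SLfree φ
  | .untl φ φ' => SLfree φ ∪ SLfree φ'
  | .exi x φ => SLfree φ \ {x}
  | .bind _ x φ => insert x (SLfree φ)

mutual
/-- Free variables of a BSL state formula. -/
def BSLfree : BSLForm AP Ag Var → Set Var
  | .atom _ => ∅
  | .neg φ => BSLfree φ
  | .or φ φ' => BSLfree φ ∪ BSLfree φ'
  | .exi x φ => BSLfree φ \ {x}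
  | .bind _ x φ => insert x (BSLfree φ)
  | .unbind _ φ => BSLfree φ
  | .pathE ψ => BSLfreeP ψ
/-- Free variables of a BSL path formula. -/
def BSLfreeP : BSLPath AP Ag Var → Set Var
  | .state φ => BSLfree φ
  | .neg ψ => BSLfreeP ψ
  | .or ψ ψ' => BSLfreeP ψ ∪ BSLfreeP ψ'
  | .next ψ => BSLfreeP ψ
  | .untl ψ ψ' => BSLfreeP ψ ∪ BSLfreeP ψ'
end

/-- `SLdefFor A φ` holds when the SL semantics of `φ` is defined in every
assignment whose agent-domain is `A`: every temporal operator is only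
evaluated under a complete assignment (every agent being bound on the way). -/
def SLdefFor (A : Set Ag) : SLForm AP Ag Var → Prop
  | .atom _ => True
  | .neg φ => SLdefFor A φ
  | .or φ φ' => SLdefFor A φ ∧ SLdefFor A φ'
  | .exi _ φ => SLdefFor A φ
  | .bind a _ φ => SLdefFor (insert a A) φ
  | .next φ => A = Set.univ ∧ SLdefFor A φ
  | .untl φ φ' => A = Set.univ ∧ SLdefFor A φ ∧ SLdefFor A φ'

/-- The translation `tr : SL → BSL`, inserting a path quantifier in front of
each temporal operator and homomorphic elsewhere. -/
def tr : SLForm AP Ag Var → BSLForm AP Ag Var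
  | .atom p => .atom p
  | .neg φ => .neg (tr φ)
  | .or φ φ' => .or (tr φ) (tr φ')
  | .next φ => .pathE (.next (.state (tr φ)))
  | .untl φ φ' => .pathE (.untl (.state (tr φ)) (.state (tr φ')))
  | .exi x φ => .exi x (tr φ)
  | .bind a x φ => .bind a x (tr φ)

mutual
/-- `φ` avoids the fresh variables (those of the form `Sum.inr a`) used by the
translation `tr_A`. -/
def BSLavoidsFresh : BSLForm AP Ag (Var ⊕ Ag) → Prop
  | .atom _ => True
  | .neg φ => BSLavoidsFresh φ
  | .or φ φ' => BSLavoidsFresh φ ∧ BSLavoidsFresh φ'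
  | .exi x φ => x.isLeft ∧ BSLavoidsFresh φ
  | .bind _ x φ => x.isLeft ∧ BSLavoidsFresh φ
  | .unbind _ φ => BSLavoidsFresh φ
  | .pathE ψ => BSLavoidsFreshP ψ
def BSLavoidsFreshP : BSLPath AP Ag (Var ⊕ Ag) → Prop
  | .state φ => BSLavoidsFresh φ
  | .neg ψ => BSLavoidsFreshP ψ
  | .or ψ ψ' => BSLavoidsFreshP ψ ∧ BSLavoidsFreshP ψ'
  | .next ψ => BSLavoidsFreshP ψ
  | .untl ψ ψ' => BSLavoidsFreshP ψ ∧ BSLavoidsFreshP ψ'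
end

/-- Prefix a formula with the bindings `(a, x_a)` for all agents `a` in `l`. -/
def bindList (l : List Ag) (φ : SLForm AP Ag (Var ⊕ Ag)) : SLForm AP Ag (Var ⊕ Ag) :=
  l.foldr (fun a ψ => .bind a (Sum.inr a) ψ) φ

/-- Prefix a formula with the strategy quantifications `⟨⟨x_a⟩⟩` for `a ∈ l`. -/
def quantList (l : List Ag) (φ : SLForm AP Ag (Var ⊕ Ag)) : SLForm AP Ag (Var ⊕ Ag) :=
  l.foldr (fun a ψ => .exi (Sum.inr a) ψ) φ

noncomputable section

mutual
/-- The translation `tr_A : BSL → SL`, parameterized by the set `A` of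
currently unbound agents; each fresh variable for agent `a` is `Sum.inr a`. -/
def trA [DecidableEq Ag] (A : Finset Ag) :
    BSLForm AP Ag (Var ⊕ Ag) → SLForm AP Ag (Var ⊕ Ag)
  | .atom p => .atom p
  | .neg φ => .neg (trA A φ)
  | .or φ φ' => .or (trA A φ) (trA A φ')
  | .exi x φ => .exi x (trA A φ)
  | .bind a x φ => .bind a x (trA (A.erase a) φ)
  | .unbind a φ => trA (insert a A) φ
  | .pathE ψ => quantList A.toList (bindList A.toList (trAP A ψ))
/-- The homomorphic extension of `tr_A` to BSL path formulas. -/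
def trAP [DecidableEq Ag] (A : Finset Ag) :
    BSLPath AP Ag (Var ⊕ Ag) → SLForm AP Ag (Var ⊕ Ag)
  | .state φ => trA A φ
  | .neg ψ => .neg (trAP A ψ)
  | .or ψ ψ' => .or (trAP A ψ) (trAP A ψ')
  | .next ψ => .next (trAP A ψ)
  | .untl ψ ψ' => .untl (trAP A ψ) (trAP A ψ')
end
end


section Aux

theorem SLdefFor_mono (φ : SLForm AP Ag Var) :
    ∀ {A B : Set Ag}, A ⊆ B → SLdefFor A φ → SLdefFor B φ := by
  induction φ with
  | atom p => intro A B _ _; trivial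
  | neg φ ih => intro A B h hd; exact ih h hd
  | or φ φ' ih ih' => intro A B h hd; exact ⟨ih h hd.1, ih' h hd.2⟩
  | next φ ih =>
      intro A B h hd
      have : B = Set.univ := Set.eq_univ_of_univ_subset (hd.1 ▸ h)
      exact ⟨this, ih h hd.2⟩
  | untl φ φ' ih ih' =>
      intro A B h hd
      have : B = Set.univ := Set.eq_univ_of_univ_subset (hd.1 ▸ h)
      exact ⟨this, ih h hd.2.1, ih' h hd.2.2⟩
  | exi x φ ih => intro A B h hd; exact ih h hd
  | bind a x φ ih => intro A B h hd; exact ih (Set.insert_subset_insert h) hd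

theorem SLdefFor_quantList (l : List Ag) (ψ : SLForm AP Ag (Var ⊕ Ag))
    {B : Set Ag} (h : SLdefFor B ψ) : SLdefFor B (quantList l ψ) := by
  induction l with
  | nil => exact h
  | cons a l ih => exact ih

theorem SLdefFor_bindList (l : List Ag) (ψ : SLForm AP Ag (Var ⊕ Ag)) :
    ∀ {B : Set Ag}, SLdefFor (B ∪ {a | a ∈ l}) ψ → SLdefFor B (bindList l ψ) := by
  induction l with
  | nil =>
      intro B h
      simpa [bindList] using SLdefFor_mono ψ (by simp) h
  | cons a l ih =>
      intro B h
      show SLdefFor (insert a B) (bindList l ψ)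
      apply ih
      apply SLdefFor_mono ψ _ h
      intro x hx
      simp only [Set.mem_union, Set.mem_insert_iff, Set.mem_setOf_eq,
        List.mem_cons] at hx ⊢
      tauto

def inrSet (l : List Ag) : Set (Var ⊕ Ag) := {v | ∃ a ∈ l, v = Sum.inr a}

theorem SLfree_bindList (l : List Ag) (ψ : SLForm AP Ag (Var ⊕ Ag)) :
    SLfree (bindList l ψ) ⊆ SLfree ψ ∪ inrSet (Var := Var) l := by
  induction l with
  | nil => simp [bindList]
  | cons a l ih =>
      show SLfree (.bind a (Sum.inr a) (bindList l ψ)) ⊆ _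
      show insert (Sum.inr a) (SLfree (bindList l ψ)) ⊆ _
      intro v hv
      rcases hv with rfl | hv
      · exact Or.inr ⟨a, by simp, rfl⟩
      · rcases ih hv with h | ⟨b, hb, rfl⟩
        · exact Or.inl h
        · exact Or.inr ⟨b, by simp [hb], rfl⟩

theorem SLfree_quantList (l : List Ag) (ψ : SLForm AP Ag (Var ⊕ Ag)) :
    SLfree (quantList l ψ) ⊆ SLfree ψ \ inrSet (Var := Var) l := by
  induction l with
  | nil => simp [quantList, inrSet]
  | cons a l ih =>
      show SLfree (.exi (Sum.inr a) (quantList l ψ)) ⊆ _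
      show SLfree (quantList l ψ) \ {Sum.inr a} ⊆ _
      intro v hv
      have h := ih hv.1
      refine ⟨h.1, ?_⟩
      rintro ⟨b, hb, rfl⟩
      rcases List.mem_cons.mp hb with rfl | hb
      · exact hv.2 rfl
      · exact h.2 ⟨b, hb, rfl⟩

theorem SLfree_quantBind (l : List Ag) (ψ : SLForm AP Ag (Var ⊕ Ag)) :
    SLfree (quantList l (bindList l ψ)) ⊆ SLfree ψ := by
  intro v hv
  have h := SLfree_quantList l (bindList l ψ) hv
  rcases SLfree_bindList l ψ h.1 with h' | h'
  · exact h'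
  · exact absurd h' h.2

mutual
theorem trA_def [DecidableEq Ag] [Fintype Ag] :
    ∀ (φ : BSLForm AP Ag (Var ⊕ Ag)) (A : Finset Ag),
      SLdefFor ((↑(Aᶜ) : Set Ag)) (trA A φ)
  | .atom p, A => trivial
  | .neg φ, A => trA_def φ A
  | .or φ φ', A => ⟨trA_def φ A, trA_def φ' A⟩
  | .exi x φ, A => trA_def φ A
  | .bind a x φ, A => by
      show SLdefFor (insert a (↑(Aᶜ) : Set Ag)) (trA (A.erase a) φ)
      have h := trA_def φ (A.erase a)
      rwa [Finset.compl_erase, Finset.coe_insert] at h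
  | .unbind a φ, A => by
      show SLdefFor ((↑(Aᶜ) : Set Ag)) (trA (insert a A) φ)
      have h := trA_def φ (insert a A)
      apply SLdefFor_mono _ _ h
      rw [Finset.compl_insert]
      exact_mod_cast Finset.coe_subset.mpr (Finset.erase_subset _ _)
  | .pathE ψ, A => by
      show SLdefFor _ (quantList A.toList (bindList A.toList (trAP A ψ)))
      apply SLdefFor_quantList
      apply SLdefFor_bindList
      apply SLdefFor_mono _ _ (trAP_def ψ A)
      intro x _
      by_cases hx : x ∈ A
      · exact Or.inr (by simpa using hx)
      · exact Or.inl (by simpa using hx)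

theorem trAP_def [DecidableEq Ag] [Fintype Ag] :
    ∀ (ψ : BSLPath AP Ag (Var ⊕ Ag)) (A : Finset Ag),
      SLdefFor (Set.univ : Set Ag) (trAP A ψ)
  | .state φ, A => SLdefFor_mono _ (Set.subset_univ _) (trA_def φ A)
  | .neg ψ, A => trAP_def ψ A
  | .or ψ ψ', A => ⟨trAP_def ψ A, trAP_def ψ' A⟩
  | .next ψ, A => ⟨rfl, trAP_def ψ A⟩
  | .untl ψ ψ', A => ⟨rfl, trAP_def ψ A, trAP_def ψ' A⟩
end

mutual
theorem trA_free [DecidableEq Ag] :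
    ∀ (φ : BSLForm AP Ag (Var ⊕ Ag)) (A : Finset Ag),
      SLfree (trA A φ) ⊆ BSLfree φ
  | .atom p, A => by simp [trA, SLfree, BSLfree]
  | .neg φ, A => trA_free φ A
  | .or φ φ', A => by
      show SLfree (trA A φ) ∪ SLfree (trA A φ') ⊆ BSLfree φ ∪ BSLfree φ'
      exact Set.union_subset_union (trA_free φ A) (trA_free φ' A)
  | .exi x φ, A => by
      show SLfree (trA A φ) \ {x} ⊆ BSLfree φ \ {x}
      exact Set.diff_subset_diff_left (trA_free φ A)
  | .bind a x φ, A => by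
      show insert x (SLfree (trA (A.erase a) φ)) ⊆ insert x (BSLfree φ)
      exact Set.insert_subset_insert (trA_free φ (A.erase a))
  | .unbind a φ, A => trA_free φ (insert a A)
  | .pathE ψ, A => by
      show SLfree (quantList A.toList (bindList A.toList (trAP A ψ))) ⊆ BSLfreeP ψ
      exact (SLfree_quantBind _ _).trans (trAP_free ψ A)

theorem trAP_free [DecidableEq Ag] :
    ∀ (ψ : BSLPath AP Ag (Var ⊕ Ag)) (A : Finset Ag),
      SLfree (trAP A ψ) ⊆ BSLfreeP ψ
  | .state φ, A => trA_free φ A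
  | .neg ψ, A => trAP_free ψ A
  | .or ψ ψ', A => Set.union_subset_union (trAP_free ψ A) (trAP_free ψ' A)
  | .next ψ, A => trAP_free ψ A
  | .untl ψ ψ', A => Set.union_subset_union (trAP_free ψ A) (trAP_free ψ' A)
end

end Aux

/-- in `tr_A(φ)` every temporal operator is under the scope of a
binding for each agent not in `A` having already been bound (in particular,
with `A = Ag`, under a binding for every agent); and if `φ` is a BSL sentence
then `tr_Ag(φ)` is an SL sentence. (In BSL, every temporal operator is
syntactically under a path quantifier, so no hypothesis on `φ` is needed.) -/
theorem statement_9 [DecidableEq Ag] [Fintype Ag]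
    (φ : BSLForm AP Ag (Var ⊕ Ag)) (A : Finset Ag) :
    SLdefFor ((↑(Aᶜ) : Set Ag)) (trA A φ) ∧
      (BSLfree φ = ∅ →
        SLfree (trA Finset.univ φ) = ∅ ∧
          SLdefFor (∅ : Set Ag) (trA Finset.univ φ)) := by
  refine ⟨trA_def φ A, fun h => ⟨?_, ?_⟩⟩
  · exact Set.subset_empty_iff.mp (h ▸ trA_free φ Finset.univ)
  · have h2 := trA_def (Var := Var) φ Finset.univ
    simpa [Finset.compl_univ] using h2
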